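/- Let q ∈ ℕ and χ a Dirichlet character mod q, a coprime to q, d ≥ 1. Then φ(q)|C|² ≤ ∑_{j ∈ (ℤ/qℤ)ˣ} |∑_{h mod q} χ(h) e(a j^d h^d/q)|², where C = ∑_{h mod q} χ(h) e(a h^d/q), and consequently |C|⁴ ≤ ∑_{h,h',j,j' mod q} e(a(h^d − h'^d)(j^d − j'^d)/q). -/

import Mathlib

open BigOperators

/-- `ψ(x) = e(x/q) = exp(2πi x/q)` for `x ∈ ℤ/qℤ`. -/
noncomputable def psi (q : ℕ) [NeZero q] (x : ZMod q) : ℂ :=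
  Complex.exp (2 * (Real.pi : ℂ) * Complex.I * ((x.val : ℂ) / (q : ℂ)))

/-- `C = ∑_{h mod q} χ(h) e(a h^d/q)`. -/
noncomputable def C11 (q : ℕ) [NeZero q] (d : ℕ) (a : ℤ) (χ : DirichletCharacter ℂ q) : ℂ :=
  ∑ h : ZMod q, χ h * psi q ((a : ZMod q) * h ^ d)

section Aux
variable (q : ℕ) [NeZero q]

lemma psi_eq_stdAddChar (x : ZMod q) : psi q x = ZMod.stdAddChar x := by
  rw [ZMod.stdAddChar_apply, ZMod.toCircle_apply]
  simp only [psi, Circle.coe_exp]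
  ring_nf

lemma psi_add (x y : ZMod q) : psi q (x + y) = psi q x * psi q y := by
  simp only [psi_eq_stdAddChar]
  exact AddChar.map_add_eq_mul _ x y

lemma psi_zero : psi q 0 = 1 := by
  simp only [psi_eq_stdAddChar]; exact AddChar.map_zero_eq_one _

lemma abs_psi (x : ZMod q) : ‖psi q x‖ = 1 := by
  rw [psi_eq_stdAddChar, ZMod.stdAddChar_apply]
  exact Circle.norm_coe _

lemma conj_psi (x : ZMod q) : (starRingEnd ℂ) (psi q x) = psi q (-x) := by
  have h1 : psi q x * psi q (-x) = 1 := by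
    rw [← psi_add]; simp [psi_zero]
  rw [← Complex.inv_eq_conj (abs_psi q x)]
  exact (eq_inv_of_mul_eq_one_right h1).symm

end Aux

section MainAux
variable (q : ℕ) [NeZero q] (d : ℕ) (a : ℤ) (χ : DirichletCharacter ℂ q)

/-- Change of variables: the twisted sum equals `χ(j⁻¹) * C`. -/
lemma sum_twist (j : (ZMod q)ˣ) :
    (∑ h : ZMod q, χ h * psi q ((a : ZMod q) * (j : ZMod q) ^ d * h ^ d))
      = χ ((j⁻¹ : (ZMod q)ˣ) : ZMod q) * C11 q d a χ := by
  rw [C11, Finset.mul_sum]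
  have hji : ((j : ZMod q)) * ((j⁻¹ : (ZMod q)ˣ) : ZMod q) = 1 := by
    rw [← Units.val_mul]; simp
  refine (Fintype.sum_bijective (fun t : ZMod q => ((j⁻¹ : (ZMod q)ˣ) : ZMod q) * t)
    (Units.mulLeft_bijective j⁻¹)
    (fun t => χ ((j⁻¹ : (ZMod q)ˣ) : ZMod q) * (χ t * psi q ((a : ZMod q) * t ^ d)))
    (fun h => χ h * psi q ((a : ZMod q) * (j : ZMod q) ^ d * h ^ d)) (fun t => ?_)).symm
  have key : (a : ZMod q) * (j : ZMod q) ^ d * (((j⁻¹ : (ZMod q)ˣ) : ZMod q) * t) ^ d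
      = (a : ZMod q) * t ^ d := by
    rw [mul_pow, show (a : ZMod q) * (j : ZMod q) ^ d
        * (((j⁻¹ : (ZMod q)ˣ) : ZMod q) ^ d * t ^ d)
        = (a : ZMod q) * (((j : ZMod q) * ((j⁻¹ : (ZMod q)ˣ) : ZMod q)) ^ d * t ^ d) from by
      rw [mul_pow]; ring, hji, one_pow, one_mul]
  rw [key, map_mul]
  ring

lemma part1_eq :
    (Nat.totient q : ℝ) * ‖C11 q d a χ‖ ^ 2
      = ∑ j : (ZMod q)ˣ,
          ‖∑ h : ZMod q, χ h * psi q ((a : ZMod q) * (j : ZMod q) ^ d * h ^ d)‖ ^ 2 := by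
  have h : ∀ j : (ZMod q)ˣ,
      ‖∑ h : ZMod q, χ h * psi q ((a : ZMod q) * (j : ZMod q) ^ d * h ^ d)‖ ^ 2
        = ‖C11 q d a χ‖ ^ 2 := by
    intro j
    rw [sum_twist, norm_mul,
      DirichletCharacter.unit_norm_eq_one χ j⁻¹, one_mul]
  rw [Finset.sum_congr rfl fun j _ => h j, Finset.sum_const, Finset.card_univ,
    ZMod.card_units_eq_totient, nsmul_eq_mul]

lemma chi_sq_sum : ∑ h : ZMod q, ‖χ h‖ ^ 2 = (Nat.totient q : ℝ) := by
  classical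
  have hsub : ∑ h ∈ Finset.univ.image (fun u : (ZMod q)ˣ => (u : ZMod q)),
      ‖χ h‖ ^ 2 = ∑ h : ZMod q, ‖χ h‖ ^ 2 := by
    refine Finset.sum_subset (Finset.subset_univ _) (fun x _ hx => ?_)
    have hnu : ¬ IsUnit x := by
      intro hu
      exact hx (Finset.mem_image.2 ⟨hu.unit, Finset.mem_univ _, hu.unit_spec⟩)
    rw [χ.map_nonunit hnu]
    simp
  rw [← hsub, Finset.sum_image (fun x _ y _ h => Units.ext h)]
  have h : ∀ u : (ZMod q)ˣ, ‖χ (u : ZMod q)‖ ^ 2 = 1 := by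
    intro u
    rw [DirichletCharacter.unit_norm_eq_one χ u, one_pow]
  rw [Finset.sum_congr rfl fun u _ => h u, Finset.sum_const, Finset.card_univ,
    ZMod.card_units_eq_totient, nsmul_eq_mul, mul_one]

/-- Expansion of `|S'(j)|²`. -/
lemma expand_sq (j : ZMod q) :
    ((‖∑ h : ZMod q, χ h * psi q ((a : ZMod q) * j ^ d * h ^ d)‖ ^ 2 : ℝ) : ℂ)
      = ∑ h : ZMod q, ∑ h' : ZMod q,
          χ h * (starRingEnd ℂ) (χ h') * psi q ((a : ZMod q) * (h ^ d - h' ^ d) * j ^ d) := by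
  set S := ∑ h : ZMod q, χ h * psi q ((a : ZMod q) * j ^ d * h ^ d) with hS
  have h1 : ((‖S‖ ^ 2 : ℝ) : ℂ) = S * (starRingEnd ℂ) S := by
    rw [Complex.sq_norm, Complex.mul_conj]
  rw [h1, hS, map_sum, Finset.sum_mul_sum]
  refine Finset.sum_congr rfl fun h _ => Finset.sum_congr rfl fun h' _ => ?_
  rw [map_mul, conj_psi, show χ h * psi q ((a : ZMod q) * j ^ d * h ^ d)
      * ((starRingEnd ℂ) (χ h') * psi q (-((a : ZMod q) * j ^ d * h' ^ d)))
      = χ h * (starRingEnd ℂ) (χ h')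
        * (psi q ((a : ZMod q) * j ^ d * h ^ d) * psi q (-((a : ZMod q) * j ^ d * h' ^ d)))
      from by ring, ← psi_add]
  congr 2
  ring

/-- Inner double sum over `j, j'` factors as `|W|²`. -/
lemma inner_factor (u : ZMod q) :
    (∑ j : ZMod q, ∑ j' : ZMod q, psi q (u * (j ^ d - j' ^ d)))
      = ((‖∑ j : ZMod q, psi q (u * j ^ d)‖ ^ 2 : ℝ) : ℂ) := by
  set W := ∑ j : ZMod q, psi q (u * j ^ d) with hW
  have h1 : ((‖W‖ ^ 2 : ℝ) : ℂ) = W * (starRingEnd ℂ) W := by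
    rw [Complex.sq_norm, Complex.mul_conj]
  rw [h1, hW, map_sum, Finset.sum_mul_sum]
  refine Finset.sum_congr rfl fun jj _ => Finset.sum_congr rfl fun j' _ => ?_
  rw [conj_psi, ← psi_add]
  congr 1
  ring

end MainAux

set_option maxHeartbeats 1000000 in
/-- One-variable Cauchy–Schwarz argument: `φ(q)|C|² ≤ ∑_{j unit} |∑_h χ(h) e(a j^d h^d/q)|²`,
and consequently `|C|⁴ ≤ ∑_{h,h',j,j'} e(a(h^d − h'^d)(j^d − j'^d)/q)`. -/
theorem stmt11 (q : ℕ) [NeZero q] (d : ℕ) (hd : 1 ≤ d) (a : ℤ) (ha : Int.gcd a q = 1)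
    (χ : DirichletCharacter ℂ q) :
    (Nat.totient q : ℝ) * ‖C11 q d a χ‖ ^ 2
      ≤ ∑ j : (ZMod q)ˣ,
          ‖∑ h : ZMod q, χ h * psi q ((a : ZMod q) * (j : ZMod q) ^ d * h ^ d)‖ ^ 2 ∧
    ‖C11 q d a χ‖ ^ 4
      ≤ (∑ h : ZMod q, ∑ h' : ZMod q, ∑ j : ZMod q, ∑ j' : ZMod q,
          psi q ((a : ZMod q) * (h ^ d - h' ^ d) * (j ^ d - j' ^ d))).re := by
  classical
  constructor
  · exact le_of_eq (part1_eq q d a χ)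
  set P : ℝ := (Nat.totient q : ℝ) with hPdef
  have hP : 0 < P := by
    rw [hPdef]
    exact_mod_cast Nat.totient_pos.2 (NeZero.pos q)
  set W : ZMod q → ZMod q → ℂ :=
    fun h h' => ∑ j : ZMod q, psi q ((a : ZMod q) * (h ^ d - h' ^ d) * j ^ d) with hWdef
  set Sig2 : ℝ := ∑ h : ZMod q, ∑ h' : ZMod q, ‖W h h'‖ ^ 2 with hSig
  -- the right-hand side equals Sig2
  have hRHS : (∑ h : ZMod q, ∑ h' : ZMod q, ∑ j : ZMod q, ∑ j' : ZMod q,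
      psi q ((a : ZMod q) * (h ^ d - h' ^ d) * (j ^ d - j' ^ d))).re = Sig2 := by
    have h1 : (∑ h : ZMod q, ∑ h' : ZMod q, ∑ j : ZMod q, ∑ j' : ZMod q,
        psi q ((a : ZMod q) * (h ^ d - h' ^ d) * (j ^ d - j' ^ d))) = ((Sig2 : ℝ) : ℂ) := by
      rw [hSig]
      push_cast
      exact Finset.sum_congr rfl fun h _ => Finset.sum_congr rfl fun h' _ => by
        simpa using inner_factor q d ((a : ZMod q) * (h ^ d - h' ^ d))
    rw [h1, Complex.ofReal_re]
  -- step 1: extend the unit sum to a full sum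
  set A : ℝ := ∑ j : ZMod q,
      ‖∑ h : ZMod q, χ h * psi q ((a : ZMod q) * j ^ d * h ^ d)‖ ^ 2 with hA
  have hmono : P * ‖C11 q d a χ‖ ^ 2 ≤ A := by
    rw [hPdef, part1_eq q d a χ, hA]
    have h1 : ∑ j : (ZMod q)ˣ,
        ‖∑ h : ZMod q, χ h * psi q ((a : ZMod q) * (j : ZMod q) ^ d * h ^ d)‖ ^ 2
        = ∑ j ∈ Finset.univ.image (fun u : (ZMod q)ˣ => (u : ZMod q)),
            ‖∑ h : ZMod q, χ h * psi q ((a : ZMod q) * j ^ d * h ^ d)‖ ^ 2 :=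
      (Finset.sum_image
        (f := fun j : ZMod q =>
          ‖∑ h : ZMod q, χ h * psi q ((a : ZMod q) * j ^ d * h ^ d)‖ ^ 2)
        (g := fun u : (ZMod q)ˣ => (u : ZMod q))
        (fun x _ y _ h => Units.ext h)).symm
    rw [h1]
    exact Finset.sum_le_sum_of_subset_of_nonneg (Finset.subset_univ _)
      (fun i _ _ => sq_nonneg _)
  have hAnonneg : 0 ≤ A := by
    rw [hA]; exact Finset.sum_nonneg fun j _ => sq_nonneg _
  -- step 2: expand A as a character-weighted sum
  set T : ℂ := ∑ h : ZMod q, ∑ h' : ZMod q, χ h * (starRingEnd ℂ) (χ h') * W h h' with hT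
  have hAT : ((A : ℝ) : ℂ) = T := by
    rw [hA, hT, Complex.ofReal_sum]
    calc ∑ j : ZMod q,
          ((‖∑ h : ZMod q, χ h * psi q ((a : ZMod q) * j ^ d * h ^ d)‖ ^ 2 : ℝ) : ℂ)
        = ∑ j : ZMod q, ∑ h : ZMod q, ∑ h' : ZMod q,
            χ h * (starRingEnd ℂ) (χ h') * psi q ((a : ZMod q) * (h ^ d - h' ^ d) * j ^ d) :=
          Finset.sum_congr rfl fun j _ => expand_sq q d a χ j
      _ = ∑ h : ZMod q, ∑ h' : ZMod q, ∑ j : ZMod q,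
            χ h * (starRingEnd ℂ) (χ h') * psi q ((a : ZMod q) * (h ^ d - h' ^ d) * j ^ d) := by
          rw [Finset.sum_comm]
          exact Finset.sum_congr rfl fun h _ => Finset.sum_comm
      _ = ∑ h : ZMod q, ∑ h' : ZMod q, χ h * (starRingEnd ℂ) (χ h') * W h h' := by
          refine Finset.sum_congr rfl fun h _ => Finset.sum_congr rfl fun h' _ => ?_
          rw [hWdef, ← Finset.mul_sum]
  have hAabsT : A ≤ ‖T‖ := by
    calc A = ((A : ℝ) : ℂ).re := (Complex.ofReal_re A).symm
      _ = T.re := by rw [hAT]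
      _ ≤ ‖T‖ := Complex.re_le_norm T
  -- step 3: triangle inequality
  have htri : ‖T‖ ≤ ∑ h : ZMod q, ∑ h' : ZMod q,
      ‖χ h‖ * ‖χ h'‖ * ‖W h h'‖ := by
    rw [hT]
    refine (norm_sum_le _ _).trans ?_
    refine Finset.sum_le_sum fun h _ => ?_
    refine (norm_sum_le _ _).trans ?_
    refine Finset.sum_le_sum fun h' _ => le_of_eq ?_
    rw [norm_mul, norm_mul, Complex.norm_conj]
  -- step 4: Cauchy–Schwarz
  have hCS : (∑ h : ZMod q, ∑ h' : ZMod q,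
      ‖χ h‖ * ‖χ h'‖ * ‖W h h'‖) ^ 2 ≤ P ^ 2 * Sig2 := by
    have h1 : ∑ h : ZMod q, ∑ h' : ZMod q,
        ‖χ h‖ * ‖χ h'‖ * ‖W h h'‖
        = ∑ p : ZMod q × ZMod q,
            (‖χ p.1‖ * ‖χ p.2‖) * ‖W p.1 p.2‖ :=
      (Fintype.sum_prod_type'
        (f := fun x y => (‖χ x‖ * ‖χ y‖) * ‖W x y‖)).symm
    rw [h1]
    refine (Finset.sum_mul_sq_le_sq_mul_sq Finset.univ
      (fun p : ZMod q × ZMod q => ‖χ p.1‖ * ‖χ p.2‖)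
      (fun p : ZMod q × ZMod q => ‖W p.1 p.2‖)).trans ?_
    have h2 : ∑ p : ZMod q × ZMod q, (‖χ p.1‖ * ‖χ p.2‖) ^ 2
        = P ^ 2 := by
      rw [Fintype.sum_prod_type]
      simp only [mul_pow]
      rw [← Finset.sum_mul_sum, chi_sq_sum q χ, hPdef, sq]
    have h3 : ∑ p : ZMod q × ZMod q, ‖W p.1 p.2‖ ^ 2 = Sig2 := by
      rw [hSig]
      exact Fintype.sum_prod_type' (f := fun x y => ‖W x y‖ ^ 2)
    rw [h2, h3]
  -- combine
  have hA2 : A ^ 2 ≤ P ^ 2 * Sig2 := by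
    calc A ^ 2 ≤ (‖T‖) ^ 2 := pow_le_pow_left₀ hAnonneg hAabsT 2
      _ ≤ (∑ h : ZMod q, ∑ h' : ZMod q,
            ‖χ h‖ * ‖χ h'‖ * ‖W h h'‖) ^ 2 :=
          pow_le_pow_left₀ (norm_nonneg _) htri 2
      _ ≤ P ^ 2 * Sig2 := hCS
  rw [hRHS]
  have key : P ^ 2 * ‖C11 q d a χ‖ ^ 4 ≤ P ^ 2 * Sig2 := by
    calc P ^ 2 * ‖C11 q d a χ‖ ^ 4 = (P * ‖C11 q d a χ‖ ^ 2) ^ 2 := by ring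
      _ ≤ A ^ 2 := pow_le_pow_left₀ (by positivity) hmono 2
      _ ≤ P ^ 2 * Sig2 := hA2
  exact le_of_mul_le_mul_left key (pow_pos hP 2)
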